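/- For every integer n ≥ 1, a(n) − 2n is negative and b(n) − 2n is nonnegative; that is, a(n) < 2n and b(n) ≥ 2n. -/

import Mathlib

/-- `a n` is the `n`-th positive integer `k` (1-indexed, in increasing order) such that
the fractional part `{k·√2}` is less than `1/2`. -/
noncomputable def a (n : ℕ) : ℕ :=
  Nat.nth (fun k => 0 < k ∧ Int.fract ((k : ℝ) * Real.sqrt 2) < 1 / 2) (n - 1)

/-- `b n` is the `n`-th positive integer `k` (1-indexed, in increasing order) such that
the fractional part `{k·√2}` is at least `1/2`. -/
noncomputable def b (n : ℕ) : ℕ :=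
  Nat.nth (fun k => 0 < k ∧ 1 / 2 ≤ Int.fract ((k : ℝ) * Real.sqrt 2)) (n - 1)

namespace Stmt2Aux



/-- convergents (denominator, numerator) of the continued fraction of `√8 = [2;1,4,1,4,...]`. -/
def rc : ℕ → ℕ × ℕ
  | 0 => (1, 2)
  | 1 => (1, 3)
  | n + 2 =>
    ((if n % 2 = 0 then 4 else 1) * (rc (n + 1)).1 + (rc n).1,
     (if n % 2 = 0 then 4 else 1) * (rc (n + 1)).2 + (rc n).2)

def r (i : ℕ) : ℕ := (rc i).1
def c (i : ℕ) : ℕ := (rc i).2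

@[simp] lemma r0 : r 0 = 1 := rfl
@[simp] lemma r1 : r 1 = 1 := rfl
@[simp] lemma c0 : c 0 = 2 := rfl
@[simp] lemma c1 : c 1 = 3 := rfl

lemma r_even_step (j : ℕ) : r (2 * j + 2) = 4 * r (2 * j + 1) + r (2 * j) := by
  show (rc (2 * j + 2)).1 = _
  rw [rc]; simp [r, Nat.mul_mod_right]

lemma r_odd_step (j : ℕ) : r (2 * j + 3) = r (2 * j + 2) + r (2 * j + 1) := by
  show (rc (2 * j + 3)).1 = _
  rw [show 2 * j + 3 = (2 * j + 1) + 2 by ring, rc]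
  have h : (2 * j + 1) % 2 = 1 := by omega
  simp [r, h]

lemma c_even_step (j : ℕ) : c (2 * j + 2) = 4 * c (2 * j + 1) + c (2 * j) := by
  show (rc (2 * j + 2)).2 = _
  rw [rc]; simp [c, Nat.mul_mod_right]

lemma c_odd_step (j : ℕ) : c (2 * j + 3) = c (2 * j + 2) + c (2 * j + 1) := by
  show (rc (2 * j + 3)).2 = _
  rw [show 2 * j + 3 = (2 * j + 1) + 2 by ring, rc]
  have h : (2 * j + 1) % 2 = 1 := by omega
  simp [c, h]

lemma rc_step (n : ℕ) : ∃ a : ℕ, 1 ≤ a ∧ r (n + 2) = a * r (n + 1) + r n ∧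
    c (n + 2) = a * c (n + 1) + c n := by
  refine ⟨if n % 2 = 0 then 4 else 1, by split <;> norm_num, ?_, ?_⟩
  · show (rc (n + 2)).1 = _; rw [rc]; rfl
  · show (rc (n + 2)).2 = _; rw [rc]; rfl

lemma r_pos : ∀ i, 0 < r i
  | 0 => one_pos
  | 1 => one_pos
  | n + 2 => by
    obtain ⟨a, ha, hr, -⟩ := rc_step n
    have := r_pos n
    omega

lemma r_lt_succ : ∀ i, 1 ≤ i → r i < r (i + 1) := by
  rintro (_ | _ | i) h
  · omega
  · show r 1 < r 2
    have h2 := r_even_step 0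
    norm_num [r0, r1] at h2 ⊢
    omega
  · obtain ⟨a, ha, hr, -⟩ := rc_step (i + 1)
    have h1 := r_pos (i + 1)
    have h2 := r_pos (i + 2)
    nlinarith [hr]

lemma r_mono_strict {α β : ℕ} (hα : 1 ≤ α) (h : α < β) : r α < r β := by
  induction β with
  | zero => omega
  | succ n ih =>
    rcases Nat.lt_or_ge α n with h' | h'
    · exact (ih h').trans (r_lt_succ n (by omega))
    · have : α = n := by omega
      subst this
      exact r_lt_succ α hα

lemma r_mono {α β : ℕ} (hα : 1 ≤ α) (h : α ≤ β) : r α ≤ r β := by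
  rcases eq_or_lt_of_le h with rfl | h'
  · exact le_rfl
  · exact (r_mono_strict hα h').le

lemma one_le_r (i : ℕ) : 1 ≤ r i := r_pos i

lemma le_two_mul_r : ∀ i, i ≤ 2 * r i
  | 0 => by simp
  | 1 => by simp
  | n + 2 => by
    obtain ⟨a, ha, hr, -⟩ := rc_step n
    have h1 := le_two_mul_r n
    have h2 := r_pos (n + 1)
    nlinarith




noncomputable def R (i : ℕ) : ℤ := r i
noncomputable def C (i : ℕ) : ℤ := c i

lemma R_even_step (j : ℕ) : R (2 * j + 2) = 4 * R (2 * j + 1) + R (2 * j) := by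
  simp only [R]; exact_mod_cast congrArg (Nat.cast : ℕ → ℤ) (r_even_step j)
lemma R_odd_step (j : ℕ) : R (2 * j + 3) = R (2 * j + 2) + R (2 * j + 1) := by
  simp only [R]; exact_mod_cast congrArg (Nat.cast : ℕ → ℤ) (r_odd_step j)
lemma C_even_step (j : ℕ) : C (2 * j + 2) = 4 * C (2 * j + 1) + C (2 * j) := by
  simp only [C]; exact_mod_cast congrArg (Nat.cast : ℕ → ℤ) (c_even_step j)
lemma C_odd_step (j : ℕ) : C (2 * j + 3) = C (2 * j + 2) + C (2 * j + 1) := by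
  simp only [C]; exact_mod_cast congrArg (Nat.cast : ℕ → ℤ) (c_odd_step j)

@[simp] lemma R0 : R 0 = 1 := by simp [R, r0]
@[simp] lemma R1 : R 1 = 1 := by simp [R, r1]
@[simp] lemma C0 : C 0 = 2 := by simp [C, c0]
@[simp] lemma C1 : C 1 = 3 := by simp [C, c1]

lemma two_le_c : ∀ i, 2 ≤ c i
  | 0 => by rw [c0]
  | 1 => by rw [c1]; omega
  | n + 2 => by
    obtain ⟨a, ha, -, hc⟩ := rc_step n
    have := two_le_c n
    have h1 := two_le_c (n+1)
    nlinarith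

lemma one_le_R (i : ℕ) : 1 ≤ R i := by
  simp only [R]; exact_mod_cast one_le_r i

lemma one_le_C (i : ℕ) : 2 ≤ C i := by
  simp only [C]; exact_mod_cast two_le_c i

lemma RC_step (n : ℕ) : ∃ a : ℤ, 1 ≤ a ∧ R (n + 2) = a * R (n + 1) + R n ∧
    C (n + 2) = a * C (n + 1) + C n := by
  obtain ⟨a, ha, hr, hc⟩ := rc_step n
  exact ⟨a, by exact_mod_cast ha, by simp only [R]; exact_mod_cast congrArg Nat.cast hr,
    by simp only [C]; exact_mod_cast congrArg Nat.cast hc⟩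

/-- Pell-type identities. -/
lemma pell : ∀ j : ℕ, 8 * R (2*j) ^ 2 = C (2*j) ^ 2 + 4 ∧
    C (2*j+1) ^ 2 = 8 * R (2*j+1) ^ 2 + 1 ∧
    8 * R (2*j+1) * R (2*j) = C (2*j+1) * C (2*j) + 2 ∧
    C (2*j+2) * C (2*j+1) = 8 * R (2*j+2) * R (2*j+1) + 2 := by
  intro j
  induction j with
  | zero =>
    have h1 := R_even_step 0; have h2 := C_even_step 0
    norm_num at h1 h2 ⊢
    rw [h1, h2]; norm_num
  | succ n ih =>
    obtain ⟨p1, p2, p3, p4⟩ := ih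
    have hR2 := R_even_step n; have hC2 := C_even_step n
    have hR3 := R_odd_step n; have hC3 := C_odd_step n
    have hR4 := R_even_step (n+1); have hC4 := C_even_step (n+1)
    have e2 : 2 * (n + 1) = 2 * n + 2 := by ring
    have e3 : 2 * (n + 1) + 1 = 2 * n + 3 := by ring
    have e4 : 2 * (n + 1) + 2 = 2 * n + 4 := by ring
    have e4' : 2 * (n + 1) + 2 = 2 * (n + 1) + 2 := rfl
    rw [e2]
    norm_num
    have hR4' : R (2*n+4) = 4 * R (2*n+3) + R (2*n+2) := by
      rw [show 2*n+4 = 2*(n+1)+2 by ring, show 2*n+3 = 2*(n+1)+1 by ring,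
        show 2*n+2 = 2*(n+1) by ring]
      exact hR4
    have hC4' : C (2*n+4) = 4 * C (2*n+3) + C (2*n+2) := by
      rw [show 2*n+4 = 2*(n+1)+2 by ring, show 2*n+3 = 2*(n+1)+1 by ring,
        show 2*n+2 = 2*(n+1) by ring]
      exact hC4
    have g1 : 8 * R (2*n+2) ^ 2 = C (2*n+2) ^ 2 + 4 := by
      rw [hR2, hC2]; linear_combination p1 - 16 * p2 + 8 * p3
    have g2 : C (2*n+3) ^ 2 = 8 * R (2*n+3) ^ 2 + 1 := by
      rw [hR3, hC3]; linear_combination -g1 + p2 + 2 * p4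
    have g3 : 8 * R (2*n+3) * R (2*n+2) = C (2*n+3) * C (2*n+2) + 2 := by
      rw [hR3, hC3]; linear_combination g1 - p4
    have g4 : C (2*n+4) * C (2*n+3) = 8 * R (2*n+4) * R (2*n+3) + 2 := by
      rw [hR4', hC4']; linear_combination 4 * g2 - g3
    exact ⟨g1, g2, g3, g4⟩

lemma pell_even (j : ℕ) : 8 * R (2*j) ^ 2 = C (2*j) ^ 2 + 4 := (pell j).1
lemma pell_odd (j : ℕ) : C (2*j+1) ^ 2 = 8 * R (2*j+1) ^ 2 + 1 := (pell j).2.1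

/-- determinant identity -/
lemma det : ∀ i : ℕ, C (i+1) * R i - C i * R (i+1) = (-1) ^ i := by
  intro i
  induction i with
  | zero => norm_num
  | succ n ih =>
    obtain ⟨a, -, hr, hc⟩ := RC_step n
    rw [hr, hc, pow_succ]
    linear_combination -ih



noncomputable def bb : ℝ := 2 * Real.sqrt 2

lemma bb_sq : bb ^ 2 = 8 := by
  have : Real.sqrt 2 ^ 2 = 2 := Real.sq_sqrt (by norm_num)
  simp [bb]; nlinarith [this]

lemma bb_pos : 0 < bb := by
  have := Real.sqrt_pos.mpr (show (0:ℝ) < 2 by norm_num)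
  simp only [bb]; linarith

lemma bb_gt : 2.8 < bb := by
  have h := Real.sq_sqrt (show (0:ℝ) ≤ 2 by norm_num)
  have h2 := Real.sqrt_nonneg 2
  simp only [bb]
  nlinarith

lemma bb_lt : bb < 3 := by
  have h := Real.sq_sqrt (show (0:ℝ) ≤ 2 by norm_num)
  have h2 := Real.sqrt_nonneg 2
  simp only [bb]
  nlinarith

/-- one-sided error of convergents, always positive -/
noncomputable def E (i : ℕ) : ℝ := (-1) ^ i * (bb * (R i : ℝ) - (C i : ℝ))

lemma bbR_eq (i : ℕ) : bb * (R i : ℝ) = (C i : ℝ) + (-1) ^ i * E i := by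
  rcases Nat.even_or_odd i with h | h
  · rw [E, h.neg_one_pow]; ring
  · rw [E, h.neg_one_pow]; ring

lemma denom_pos (i : ℕ) : 0 < bb * (R i : ℝ) + (C i : ℝ) := by
  have h1 : (1 : ℝ) ≤ (R i : ℝ) := by exact_mod_cast one_le_R i
  have h2 : (2 : ℝ) ≤ (C i : ℝ) := by exact_mod_cast one_le_C i
  nlinarith [bb_pos]

lemma E_mul (i : ℕ) : E i * (bb * (R i : ℝ) + (C i : ℝ)) = if Even i then 4 else 1 := by
  rcases Nat.even_or_odd i with h | h
  · obtain ⟨j, hj⟩ := h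
    have hp : 8 * (R i : ℝ) ^ 2 = (C i : ℝ) ^ 2 + 4 := by
      have := pell_even j
      rw [show 2 * j = i by omega] at this
      exact_mod_cast congrArg (Int.cast : ℤ → ℝ) this
    rw [if_pos ⟨j, hj⟩, E, (show Even i from ⟨j, hj⟩).neg_one_pow]
    have h8 : bb ^ 2 = 8 := bb_sq
    nlinarith [hp]
  · obtain ⟨j, hj⟩ := h
    have hp : (C i : ℝ) ^ 2 = 8 * (R i : ℝ) ^ 2 + 1 := by
      have := pell_odd j
      rw [show 2 * j + 1 = i by omega] at this
      exact_mod_cast congrArg (Int.cast : ℤ → ℝ) this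
    rw [if_neg (by simp [Nat.odd_iff.mp ⟨j, hj⟩, Nat.even_iff]), E,
      (show Odd i from ⟨j, hj⟩).neg_one_pow]
    have h8 : bb ^ 2 = 8 := bb_sq
    nlinarith [hp]

lemma E_pos (i : ℕ) : 0 < E i := by
  have h := E_mul i
  have hd := denom_pos i
  rcases Nat.even_or_odd i with he | ho
  · rw [if_pos he] at h; nlinarith
  · rw [if_neg (Nat.not_even_iff_odd.mpr ho)] at h; nlinarith

lemma E_lt_one (i : ℕ) : E i < 1 := by
  have h := E_mul i
  have hd : 4.8 < bb * (R i : ℝ) + (C i : ℝ) := by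
    have h1 : (1 : ℝ) ≤ (R i : ℝ) := by exact_mod_cast one_le_R i
    have h2 : (2 : ℝ) ≤ (C i : ℝ) := by exact_mod_cast one_le_C i
    nlinarith [bb_gt]
  have hp := E_pos i
  rcases Nat.even_or_odd i with he | ho
  · rw [if_pos he] at h; nlinarith
  · rw [if_neg (Nat.not_even_iff_odd.mpr ho)] at h; nlinarith

lemma E_odd_lt_half (i : ℕ) (h : Odd i) : E i < 1/2 := by
  have hm := E_mul i
  rw [if_neg (Nat.not_even_iff_odd.mpr h)] at hm
  have hd : 4.8 < bb * (R i : ℝ) + (C i : ℝ) := by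
    have h1 : (1 : ℝ) ≤ (R i : ℝ) := by exact_mod_cast one_le_R i
    have h2 : (2 : ℝ) ≤ (C i : ℝ) := by exact_mod_cast one_le_C i
    nlinarith [bb_gt]
  nlinarith [E_pos i]

lemma neg_one_sq_int (i : ℕ) : ((-1:ℤ))^i * ((-1:ℤ))^i = 1 := by
  rw [← pow_add]
  exact Even.neg_one_pow ⟨i, rfl⟩

/-- best approximation property -/
lemma key (i : ℕ) (t u : ℤ) (ht1 : 1 ≤ t) (ht2 : t < R (i+1))
    (h : |bb * (t:ℝ) - (u:ℝ)| ≤ E i) : t = R i ∧ u = C i := by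
  have hd := det i
  have hε := neg_one_sq_int i
  set x : ℤ := (-1)^i * (C (i+1) * t - R (i+1) * u) with hx
  set y : ℤ := (-1)^i * (R i * u - C i * t) with hy
  have hT : t = x * R i + y * R (i+1) := by
    rw [hx, hy]; linear_combination (-((-1:ℤ)^i * t)) * hd - t * hε
  have hU : u = x * C i + y * C (i+1) := by
    rw [hx, hy]; linear_combination (-((-1:ℤ)^i * u)) * hd - u * hε
  have hE0 := E_pos i
  have hE1 := E_pos (i+1)
  have hR0 : (1:ℤ) ≤ R i := one_le_R i
  have hR1 : (1:ℤ) ≤ R (i+1) := one_le_R (i+1)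
  have hTc : (t:ℝ) = (x:ℝ) * ((R i : ℤ):ℝ) + (y:ℝ) * ((R (i+1) : ℤ):ℝ) := by exact_mod_cast congrArg (fun z : ℤ => (z:ℝ)) hT
  have hUc : (u:ℝ) = (x:ℝ) * ((C i : ℤ):ℝ) + (y:ℝ) * ((C (i+1) : ℤ):ℝ) := by exact_mod_cast congrArg (fun z : ℤ => (z:ℝ)) hU
  have habs : |bb * (t:ℝ) - (u:ℝ)| = |(x:ℝ) * E i - (y:ℝ) * E (i+1)| := by
    have e0 := bbR_eq i
    have e1 := bbR_eq (i+1)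
    rcases Nat.even_or_odd i with hev | hod
    · have p0 : ((-1:ℝ))^i = 1 := hev.neg_one_pow
      have p1 : ((-1:ℝ))^(i+1) = -1 := (hev.add_one).neg_one_pow
      rw [p0] at e0; rw [p1] at e1
      have heq : bb * (t:ℝ) - (u:ℝ) = (x:ℝ) * E i - (y:ℝ) * E (i+1) := by
        linear_combination bb * hTc - hUc + (x:ℝ) * e0 + (y:ℝ) * e1
      rw [heq]
    · have hev1 : Even (i+1) := by rcases hod with ⟨j, hj⟩; exact ⟨j+1, by omega⟩
      have p0 : ((-1:ℝ))^i = -1 := hod.neg_one_pow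
      have p1 : ((-1:ℝ))^(i+1) = 1 := hev1.neg_one_pow
      rw [p0] at e0; rw [p1] at e1
      have heq : bb * (t:ℝ) - (u:ℝ) = -((x:ℝ) * E i - (y:ℝ) * E (i+1)) := by
        linear_combination bb * hTc - hUc + (x:ℝ) * e0 + (y:ℝ) * e1
      rw [heq, abs_neg]
  rw [habs] at h
  rcases lt_trichotomy y 0 with hy1 | hy0 | hy1
  · have hy1' : y ≤ -1 := by omega
    rcases le_or_gt x 0 with hx0 | hx1
    · exfalso; nlinarith [hT]
    · exfalso
      have hxr : (1:ℝ) ≤ (x:ℝ) := by exact_mod_cast hx1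
      have hyr : (y:ℝ) ≤ -1 := by exact_mod_cast hy1'
      have hz : E i + E (i+1) ≤ (x:ℝ) * E i - (y:ℝ) * E (i+1) := by nlinarith
      have := le_abs_self ((x:ℝ) * E i - (y:ℝ) * E (i+1))
      linarith
  · rw [hy0] at hT hU h
    have hx1 : 1 ≤ x := by nlinarith [hT]
    have hx2 : x ≤ 1 := by
      by_contra hc
      push_neg at hc
      have hxr : (2:ℝ) ≤ (x:ℝ) := by exact_mod_cast hc
      have := le_abs_self ((x:ℝ) * E i - ((0:ℤ):ℝ) * E (i+1))
      push_cast at this h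
      nlinarith
    have hx : x = 1 := le_antisymm hx2 hx1
    rw [hx] at hT hU
    simp at hT hU
    exact ⟨hT, hU⟩
  · have hy1' : 1 ≤ y := hy1
    rcases le_or_gt 0 x with hx0 | hx1
    · exfalso; nlinarith [hT]
    · have hx1' : x ≤ -1 := by omega
      exfalso
      have hxr : (x:ℝ) ≤ -1 := by exact_mod_cast hx1'
      have hyr : (1:ℝ) ≤ (y:ℝ) := by exact_mod_cast hy1'
      have hz : (x:ℝ) * E i - (y:ℝ) * E (i+1) ≤ -(E i + E (i+1)) := by nlinarith
      have := neg_abs_le ((x:ℝ) * E i - (y:ℝ) * E (i+1))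
      linarith

lemma bb_t_irrational (t : ℕ) (ht : 1 ≤ t) : Irrational (bb * (t:ℝ)) := by
  have h1 : Irrational ((2 * t : ℕ) * Real.sqrt 2) :=
    irrational_sqrt_two.natCast_mul (by omega)
  have : bb * (t:ℝ) = ((2*t : ℕ) : ℝ) * Real.sqrt 2 := by
    push_cast; simp [bb]; ring
  rwa [this]

lemma fract_pos (t : ℕ) (ht : 1 ≤ t) : 0 < Int.fract (bb * (t:ℝ)) := by
  rcases lt_or_eq_of_le (Int.fract_nonneg (bb * (t:ℝ))) with h | h
  · exact h
  · exfalso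
    have : bb * (t:ℝ) = (⌊bb * (t:ℝ)⌋ : ℝ) := by
      have := Int.fract_add_floor (bb * (t:ℝ))
      rw [← h] at this; linarith [this]
    exact (bb_t_irrational t ht).ne_int _ this

/-- the floor translation lemma -/
lemma floor_trans (i : ℕ) (t : ℕ) (ht1 : 1 ≤ t) (ht2 : (t:ℤ) < R (i+1)) :
    ⌊bb * ((r i + t : ℕ) : ℝ)⌋ = C i + ⌊bb * (t:ℝ)⌋ := by
  have hsplit : bb * ((r i + t : ℕ) : ℝ) = bb * ((R i : ℤ) : ℝ) + bb * (t:ℝ) := by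
    push_cast [R]; ring
  set F : ℤ := ⌊bb * (t:ℝ)⌋ with hF
  have hf0 : 0 < Int.fract (bb * (t:ℝ)) := fract_pos t ht1
  have hf1 : Int.fract (bb * (t:ℝ)) < 1 := Int.fract_lt_one _
  have hfe : bb * (t:ℝ) = (F:ℝ) + Int.fract (bb * (t:ℝ)) := by
    rw [hF]; linarith [Int.fract_add_floor (bb * (t:ℝ))]
  set f : ℝ := Int.fract (bb * (t:ℝ))
  have ht1' : (1:ℤ) ≤ (t:ℤ) := by exact_mod_cast ht1
  have hE0 := E_pos i
  have hE1 := E_lt_one i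
  rcases Nat.even_or_odd i with hev | hod
  · -- bb * R i = C i + E i ; need f < 1 - E i
    have e0 := bbR_eq i
    rw [hev.neg_one_pow, one_mul] at e0
    have hflt : f < 1 - E i := by
      by_contra hc
      push_neg at hc
      have hkey := key i t (F + 1) ht1' ht2 (by
        rw [abs_le]
        push_cast
        constructor <;> nlinarith [hfe])
      have h1 : (t:ℤ) = R i := hkey.1
      have h2 : F + 1 = C i := hkey.2
      -- then bb*t - (F+1) = E i > 0 but also = f - 1 < 0
      have : bb * (t:ℝ) - ((F:ℝ) + 1) = E i := by
        rw [show (t:ℝ) = ((R i : ℤ):ℝ) by exact_mod_cast congrArg (fun z:ℤ => (z:ℝ)) h1]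
        have : ((F:ℝ) + 1) = ((C i : ℤ):ℝ) := by exact_mod_cast congrArg (fun z:ℤ => (z:ℝ)) h2
        rw [this]; linarith [e0]
      nlinarith [hfe]
    rw [hsplit, e0, hfe]
    rw [show ((C i:ℤ):ℝ) + E i + ((F:ℝ) + f) = ((C i + F : ℤ) : ℝ) + (E i + f) by push_cast; ring]
    rw [Int.floor_intCast_add]
    have : ⌊E i + f⌋ = 0 := by
      rw [Int.floor_eq_zero_iff, Set.mem_Ico]
      constructor
      · linarith
      · linarith
    omega
  · -- bb * R i = C i - E i ; need E i ≤ f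
    have e0 := bbR_eq i
    rw [hod.neg_one_pow] at e0
    have hfge : E i ≤ f := by
      by_contra hc
      push_neg at hc
      have hkey := key i t F ht1' ht2 (by
        rw [abs_le]
        push_cast
        constructor <;> nlinarith [hfe])
      have h1 : (t:ℤ) = R i := hkey.1
      have h2 : F = C i := hkey.2
      have : bb * (t:ℝ) - (F:ℝ) = -(E i) := by
        rw [show (t:ℝ) = ((R i : ℤ):ℝ) by exact_mod_cast congrArg (fun z:ℤ => (z:ℝ)) h1]
        have : (F:ℝ) = ((C i : ℤ):ℝ) := by exact_mod_cast congrArg (fun z:ℤ => (z:ℝ)) h2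
        rw [this]; linarith [e0]
      nlinarith [hfe]
    rw [hsplit, e0, hfe]
    rw [show ((C i:ℤ):ℝ) + -1 * E i + ((F:ℝ) + f) = ((C i + F : ℤ) : ℝ) + (f - E i) by push_cast; ring]
    rw [Int.floor_intCast_add]
    have : ⌊f - E i⌋ = 0 := by
      rw [Int.floor_eq_zero_iff, Set.mem_Ico]
      constructor
      · linarith
      · linarith
    omega



lemma r_lt_two_step (i : ℕ) : r i < r (i + 2) := by
  rcases Nat.even_or_odd i with ⟨j, hj⟩ | ⟨j, hj⟩
  · have hi : i = 2 * j := by omega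
    subst hi
    have h := r_even_step j
    have h1 := one_le_r (2*j+1)
    omega
  · have hi : i = 2*j+1 := by omega
    subst hi
    have hh : 2*j+1+2 = 2*j+3 := by ring
    rw [hh]
    have h := r_odd_step j
    have h2 := r_even_step j
    have h1 := one_le_r (2*j+1)
    have h0 := one_le_r (2*j)
    omega

-- parity of c
lemma c_parity : ∀ j : ℕ, c (2*j) % 2 = 0 ∧ c (2*j+1) % 2 = 1 := by
  intro j
  induction j with
  | zero => norm_num [c0, c1]
  | succ n ih =>
    have h2 := c_even_step n
    have h3 := c_odd_step n
    constructor
    · have : 2 * (n+1) = 2*n+2 := by ring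
      rw [this, h2]; omega
    · have : 2 * (n+1) + 1 = 2*n+3 := by ring
      rw [this, h3, h2]; omega

noncomputable def s (k : ℕ) : ℤ := if Even ⌊bb * (k:ℝ)⌋ then 1 else -1

noncomputable def S : ℕ → ℤ
  | 0 => 0
  | m + 1 => S m + s (m + 1)

lemma s_trans (i : ℕ) (t : ℕ) (ht1 : 1 ≤ t) (ht2 : (t:ℤ) < R (i+1)) :
    s (r i + t) = (if Even i then s t else - s t) := by
  have hf := floor_trans i t ht1 ht2
  have hC : Even (C i) ↔ Even i := by
    rcases Nat.even_or_odd i with ⟨j, hj⟩ | ⟨j, hj⟩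
    · have := (c_parity j).1
      have hi : i = 2*j := by omega
      subst hi
      simp only [C]
      constructor
      · intro _; exact ⟨j, by omega⟩
      · intro _; exact Int.even_coe_nat _ |>.mpr (Nat.even_iff.mpr this)
    · have := (c_parity j).2
      have hi : i = 2*j+1 := by omega
      subst hi
      simp only [C]
      constructor
      · intro hcontra
        have : (c (2*j+1)) % 2 = 0 := Nat.even_iff.mp ((Int.even_coe_nat _).mp hcontra)
        omega
      · intro ⟨k, hk⟩; omega
  simp only [s, hf]
  rcases Nat.even_or_odd i with hev | hod
  · rw [if_pos hev]
    have hCe : Even (C i) := hC.mpr hev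
    have : Even (C i + ⌊bb * (t:ℝ)⌋) ↔ Even ⌊bb * (t:ℝ)⌋ := by
      rw [Int.even_add]; tauto
    by_cases hE : Even ⌊bb * (t:ℝ)⌋
    · rw [if_pos (this.mpr hE), if_pos hE]
    · rw [if_neg (fun hh => hE (this.mp hh)), if_neg hE]
  · rw [if_neg (Nat.not_even_iff_odd.mpr hod)]
    have hCo : ¬ Even (C i) := fun hh => (Nat.not_even_iff_odd.mpr hod) (hC.mp hh)
    have : Even (C i + ⌊bb * (t:ℝ)⌋) ↔ ¬ Even ⌊bb * (t:ℝ)⌋ := by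
      rw [Int.even_add]; tauto
    by_cases hE : Even ⌊bb * (t:ℝ)⌋
    · rw [if_neg (fun hh => (this.mp hh) hE), if_pos hE]
    · rw [if_pos (this.mpr hE), if_neg hE]
      ring

lemma S_trans (i : ℕ) (t : ℕ) (ht2 : (t:ℤ) < R (i+1)) :
    S (r i + t) = S (r i) + (if Even i then S t else - S t) := by
  induction t with
  | zero => simp [S]
  | succ n ih =>
    have hn : (n:ℤ) < R (i+1) := by push_cast at ht2 ⊢; omega
    have hs := s_trans i (n+1) (by omega) ht2
    have harg : r i + (n+1) = (r i + n) + 1 := by omega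
    rw [harg]
    show S (r i + n) + s (r i + n + 1) = _
    have harg2 : r i + n + 1 = r i + (n + 1) := by omega
    rw [harg2, hs, ih hn]
    rcases Nat.even_or_odd i with hev | hod
    · rw [if_pos hev, if_pos hev, if_pos hev]
      show _ = S (r i) + (S n + s (n+1))
      ring
    · rw [if_neg (Nat.not_even_iff_odd.mpr hod), if_neg (Nat.not_even_iff_odd.mpr hod),
        if_neg (Nat.not_even_iff_odd.mpr hod)]
      show _ = S (r i) + -(S n + s (n+1))
      ring

lemma castR {x i : ℕ} (h : x < r i) : (x:ℤ) < R i := by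
  simp only [R]; exact_mod_cast h

lemma S_one : S 1 = 1 := by
  have h1 : ⌊bb⌋ = 2 := by
    rw [Int.floor_eq_iff]
    push_cast
    constructor <;> nlinarith [bb_gt, bb_lt]
  show S 0 + s 1 = 1
  have h2 : bb * ((1:ℕ):ℝ) = bb := by norm_num
  simp [S, s, h2, h1]

lemma S_base : ∀ j : ℕ, S (r (2*j)) = 1 ∧ S (r (2*j+1)) = (j:ℤ) + 1 := by
  intro j
  induction j with
  | zero =>
    refine ⟨?_, ?_⟩
    · rw [show (2*0 : ℕ) = 0 from rfl, r0, S_one]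
    · rw [show (2*0+1 : ℕ) = 1 from rfl, r1, S_one]
      norm_num
  | succ n ih =>
    obtain ⟨h0, h1⟩ := ih
    have hq1 : 1 ≤ r (2*n+1) := one_le_r _
    have hq0 : 1 ≤ r (2*n) := one_le_r _
    have hstep : r (2*n+2) = 4 * r (2*n+1) + r (2*n) := r_even_step n
    have hodd : ¬ Even (2*n+1) := by simp [Nat.even_iff]
    have heven : Even (2*n+2) := ⟨n+1, by ring⟩
    -- translations at i = 2n+1
    have T : ∀ t : ℕ, t < r (2*n+2) → S (r (2*n+1) + t) = S (r (2*n+1)) - S t := by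
      intro t ht
      have := S_trans (2*n+1) t (castR ht)
      rw [if_neg hodd] at this
      linarith [this]
    have b1 : r (2*n) < r (2*n+2) := r_lt_two_step _
    have b2 : r (2*n+1) + r (2*n) < r (2*n+2) := by omega
    have b3 : r (2*n+1) + (r (2*n+1) + r (2*n)) < r (2*n+2) := by omega
    have b4 : r (2*n+1) + (r (2*n+1) + (r (2*n+1) + r (2*n))) < r (2*n+2) := by omega
    have v1 : S (r (2*n+1) + r (2*n)) = (n:ℤ) := by rw [T _ b1, h0, h1]; ring
    have v2 : S (r (2*n+1) + (r (2*n+1) + r (2*n))) = 1 := by rw [T _ b2, v1, h1]; ring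
    have v3 : S (r (2*n+1) + (r (2*n+1) + (r (2*n+1) + r (2*n)))) = (n:ℤ) := by
      rw [T _ b3, v2, h1]; ring
    have v4 : S (r (2*n+1) + (r (2*n+1) + (r (2*n+1) + (r (2*n+1) + r (2*n))))) = 1 := by
      rw [T _ b4, v3, h1]; ring
    have harg : r (2*n+2) = r (2*n+1) + (r (2*n+1) + (r (2*n+1) + (r (2*n+1) + r (2*n)))) := by
      omega
    have g1 : S (r (2*n+2)) = 1 := by rw [harg]; exact v4
    -- next odd
    have hb5 : r (2*n+1) < r (2*n+3) := r_lt_two_step _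
    have T2 := S_trans (2*n+2) (r (2*n+1)) (by
      have : (2*n+2)+1 = 2*n+3 := by ring
      rw [this]; exact castR hb5)
    rw [if_pos heven] at T2
    have harg2 : r (2*n+3) = r (2*n+2) + r (2*n+1) := r_odd_step n
    have g2 : S (r (2*n+3)) = (n:ℤ) + 2 := by rw [harg2, T2, g1, h1]; ring
    constructor
    · rw [show 2*(n+1) = 2*n+2 by ring]; exact g1
    · rw [show 2*(n+1)+1 = 2*n+3 by ring, g2]; push_cast; ring

lemma S_main : ∀ m : ℕ, 0 ≤ S m ∧ ∀ j : ℕ, m < r (2*j+2) → S m ≤ (j:ℤ) + 1 := by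
  intro m
  induction m using Nat.strong_induction_on with
  | _ m ih =>
  rcases Nat.eq_zero_or_pos m with rfl | hm
  · refine ⟨le_refl 0, fun j _ => ?_⟩
    show (S 0 : ℤ) ≤ (j:ℤ) + 1
    simp only [S]
    positivity
  · obtain ⟨I, hIdef⟩ : ∃ I, I = Nat.findGreatest (fun i => r i ≤ m) (2*m+2) := ⟨_, rfl⟩
    have hI1 : 1 ≤ I := hIdef ▸ Nat.le_findGreatest (by omega) (by show r 1 ≤ m; rw [r1]; omega)
    have hPI : r I ≤ m := hIdef ▸ Nat.findGreatest_spec (P := fun i => r i ≤ m)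
      (show 1 ≤ 2*m+2 by omega) (by show r 1 ≤ m; rw [r1]; omega)
    have hIle : I ≤ 2*m := by
      have := le_two_mul_r I
      omega
    have hm_lt : m < r (I+1) := by
      by_contra hcon
      push_neg at hcon
      have := Nat.le_findGreatest (P := fun i => r i ≤ m)
        (show I+1 ≤ 2*m+2 by omega) hcon
      omega
    obtain ⟨t, ht⟩ : ∃ t, m = r I + t := ⟨m - r I, by omega⟩
    have htm : t < m := by have := one_le_r I; omega
    have hts : (t:ℤ) < R (I+1) := castR (by omega)
    have hTr := S_trans I t hts
    obtain ⟨ih0, ihb⟩ := ih t htm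
    rcases Nat.even_or_odd I with hev | hod
    · -- I = 2j, j ≥ 1
      obtain ⟨j, hj⟩ := hev
      have hj' : I = 2*j := by omega
      obtain ⟨k, rfl⟩ : ∃ k, j = k + 1 := ⟨j - 1, by omega⟩
      subst hj'
      rw [if_pos ⟨k+1, by omega⟩] at hTr
      have hSrI : S (r (2*(k+1))) = 1 := (S_base (k+1)).1
      rw [ht, hTr, hSrI]
      have hsplit : r (2*k+3) = r (2*k+2) + r (2*k+1) := r_odd_step k
      have hidx : 2*(k+1)+1 = 2*k+3 := by ring
      have hidx2 : 2*(k+1) = 2*k+2 := by ring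
      rw [hidx] at hm_lt
      rw [hidx2] at ht ⊢
      have htlt : t < r (2*k+1) := by omega
      have htlt2 : t < r (2*k+2) := lt_of_lt_of_le htlt (r_mono (by omega) (by omega))
      have hSt : S t ≤ (k:ℤ) + 1 := ihb k htlt2
      constructor
      · linarith
      · intro j' hj'lt
        have hkj : k + 1 ≤ j' := by
          by_contra hcon
          push_neg at hcon
          have : r (2*j'+2) ≤ r (2*k+2) := r_mono (by omega) (by omega)
          omega
        have : ((k:ℤ) + 1) ≤ (j':ℤ) := by exact_mod_cast hkj
        linarith
    · -- I = 2j+1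
      obtain ⟨j, hj⟩ := hod
      subst hj
      rw [if_neg (by simp [Nat.even_iff])] at hTr
      have hSrI : S (r (2*j+1)) = (j:ℤ) + 1 := (S_base j).2
      rw [ht, hTr, hSrI]
      have ht_r : t < r (2*j+2) := by
        have : (2*j+1)+1 = 2*j+2 := by ring
        rw [this] at hm_lt
        omega
      have hSt : S t ≤ (j:ℤ) + 1 := ihb j ht_r
      constructor
      · linarith
      · intro j' hj'lt
        have hkj : j ≤ j' := by
          by_contra hcon
          push_neg at hcon
          have : r (2*j'+2) ≤ r (2*j+1) := r_mono (by omega) (by omega)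
          omega
        have : ((j:ℤ)) ≤ (j':ℤ) := by exact_mod_cast hkj
        linarith

lemma S_parity : ∀ m : ℕ, Even (S m - (m:ℤ)) := by
  intro m
  induction m with
  | zero => simp [S]
  | succ n ih =>
    have hs : s (n+1) = 1 ∨ s (n+1) = -1 := by
      unfold s; split
      · exact Or.inl rfl
      · exact Or.inr rfl
    rw [Int.even_iff] at ih ⊢
    show (S n + s (n+1) - ((n:ℤ)+1)) % 2 = 0
    rcases hs with h | h <;> rw [h] <;> omega

lemma S_odd_ge_one (k : ℕ) : 1 ≤ S (2*k+1) := by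
  obtain ⟨h0, -⟩ := S_main (2*k+1)
  have hp := S_parity (2*k+1)
  rw [Int.even_iff] at hp
  push_cast at hp
  omega


/-! ### Connection with fractional parts and counting -/

lemma even_floor_iff (x : ℝ) : Even ⌊2 * x⌋ ↔ Int.fract x < 1/2 := by
  have hx : x = (⌊x⌋ : ℝ) + Int.fract x := by
    rw [Int.floor_add_fract]
  have h2 : (2:ℝ) * x = ((2 * ⌊x⌋ : ℤ) : ℝ) + 2 * Int.fract x := by
    push_cast
    nlinarith [hx]
  have hf0 : 0 ≤ Int.fract x := Int.fract_nonneg x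
  have hf1 : Int.fract x < 1 := Int.fract_lt_one x
  by_cases hc : Int.fract x < 1/2
  · have : ⌊2 * x⌋ = 2 * ⌊x⌋ := by
      rw [h2, Int.floor_intCast_add]
      have : ⌊2 * Int.fract x⌋ = 0 := by
        rw [Int.floor_eq_zero_iff, Set.mem_Ico]
        constructor <;> [linarith; linarith]
      omega
    rw [this]
    constructor
    · intro _; exact hc
    · intro _; exact ⟨⌊x⌋, by ring⟩
  · push_neg at hc
    have : ⌊2 * x⌋ = 2 * ⌊x⌋ + 1 := by
      rw [h2, Int.floor_intCast_add]
      have : ⌊2 * Int.fract x⌋ = 1 := by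
        rw [Int.floor_eq_iff]
        push_cast
        constructor <;> linarith
      omega
    constructor
    · intro hh
      rw [this] at hh
      exfalso
      rcases hh with ⟨w, hw⟩
      omega
    · intro hh
      linarith

def pA (k : ℕ) : Prop := 0 < k ∧ Int.fract ((k : ℝ) * Real.sqrt 2) < 1 / 2
def qB (k : ℕ) : Prop := 0 < k ∧ 1 / 2 ≤ Int.fract ((k : ℝ) * Real.sqrt 2)

lemma floor_bb_eq (k : ℕ) : ⌊bb * (k:ℝ)⌋ = ⌊2 * ((k:ℝ) * Real.sqrt 2)⌋ := by
  congr 1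
  simp only [bb]; ring

lemma pA_iff (k : ℕ) (hk : 0 < k) : pA k ↔ s k = 1 := by
  unfold pA s
  rw [floor_bb_eq]
  constructor
  · rintro ⟨-, h⟩
    rw [if_pos ((even_floor_iff _).mpr (by linarith [h]))]
  · intro h
    by_cases he : Even ⌊2 * ((k:ℝ) * Real.sqrt 2)⌋
    · exact ⟨hk, by linarith [(even_floor_iff ((k:ℝ) * Real.sqrt 2)).mp he]⟩
    · rw [if_neg he] at h; norm_num at h

lemma qB_iff (k : ℕ) (hk : 0 < k) : qB k ↔ s k = -1 := by
  unfold qB s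
  rw [floor_bb_eq]
  constructor
  · rintro ⟨-, h⟩
    rw [if_neg (fun he => by linarith [(even_floor_iff ((k:ℝ) * Real.sqrt 2)).mp he])]
  · intro h
    by_cases he : Even ⌊2 * ((k:ℝ) * Real.sqrt 2)⌋
    · rw [if_pos he] at h; norm_num at h
    · refine ⟨hk, ?_⟩
      by_contra hc
      push_neg at hc
      exact he ((even_floor_iff _).mpr hc)

open Classical in
lemma count_eq (m : ℕ) : (Nat.count pA (m+1) : ℤ) + (Nat.count qB (m+1) : ℤ) = m ∧
    (2 * Nat.count pA (m+1) : ℤ) = m + S m := by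
  induction m with
  | zero =>
    have h1 : ¬ pA 0 := fun h => by simp [pA] at h
    have h2 : ¬ qB 0 := fun h => by simp [qB] at h
    rw [Nat.count_succ, Nat.count_succ, if_neg h1, if_neg h2]
    simp [S]
  | succ n ih =>
    obtain ⟨ih1, ih2⟩ := ih
    have hs : s (n+1) = 1 ∨ s (n+1) = -1 := by
      unfold s; split
      · exact Or.inl rfl
      · exact Or.inr rfl
    have hS : S (n+1) = S n + s (n+1) := rfl
    rcases hs with h | h
    · have hp : pA (n+1) := (pA_iff (n+1) (by omega)).mpr h
      have hq : ¬ qB (n+1) := fun hh => by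
        have := (qB_iff (n+1) (by omega)).mp hh
        omega
      rw [show Nat.count pA (n+1+1) = Nat.count pA (n+1) + if pA (n+1) then 1 else 0 from Nat.count_succ _ (n+1),
        show Nat.count qB (n+1+1) = Nat.count qB (n+1) + if qB (n+1) then 1 else 0 from Nat.count_succ _ (n+1),
        if_pos hp, if_neg hq]
      constructor
      · push_cast; push_cast at ih1; omega
      · rw [hS, h]; push_cast; push_cast at ih2; omega
    · have hq : qB (n+1) := (qB_iff (n+1) (by omega)).mpr h
      have hp : ¬ pA (n+1) := fun hh => by
        have := (pA_iff (n+1) (by omega)).mp hh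
        omega
      rw [show Nat.count pA (n+1+1) = Nat.count pA (n+1) + if pA (n+1) then 1 else 0 from Nat.count_succ _ (n+1),
        show Nat.count qB (n+1+1) = Nat.count qB (n+1) + if qB (n+1) then 1 else 0 from Nat.count_succ _ (n+1),
        if_neg hp, if_pos hq]
      constructor
      · push_cast; push_cast at ih1; omega
      · rw [hS, h]; push_cast; push_cast at ih2; omega

lemma pA_infinite : {k | pA k}.Infinite := by
  refine Set.infinite_of_injective_forall_mem (f := fun j : ℕ => r (2*(j+1))) ?_ ?_
  · have hsm : StrictMono (fun j : ℕ => r (2*(j+1))) := by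
      apply strictMono_nat_of_lt_succ
      intro n
      exact r_mono_strict (by omega) (by omega)
    exact hsm.injective
  · intro j
    have hE0 := E_pos (2*(j+1))
    have hE1 := E_lt_one (2*(j+1))
    have heq := bbR_eq (2*(j+1))
    rw [(show Even (2*(j+1)) from ⟨j+1, by ring⟩).neg_one_pow, one_mul] at heq
    have hfl : ⌊bb * ((r (2*(j+1)) : ℕ) : ℝ)⌋ = C (2*(j+1)) := by
      have hcast : ((R (2*(j+1)) : ℤ) : ℝ) = ((r (2*(j+1)) : ℕ) : ℝ) := by
        simp [R]
      rw [← hcast, Int.floor_eq_iff, heq]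
      constructor <;> [linarith; linarith]
    have hCe : Even (C (2*(j+1))) := by
      have h := (c_parity (j+1)).1
      obtain ⟨w, hw⟩ : ∃ w, c (2*(j+1)) = w + w := ⟨c (2*(j+1))/2, by omega⟩
      exact ⟨(w:ℤ), by simp only [C, hw]; push_cast; ring⟩
    show pA (r (2*(j+1)))
    refine ⟨r_pos _, ?_⟩
    have := (even_floor_iff ((r (2*(j+1)) : ℝ) * Real.sqrt 2)).mp (by
      rw [← floor_bb_eq, hfl]; exact hCe)
    linarith

lemma qB_infinite : {k | qB k}.Infinite := by
  refine Set.infinite_of_injective_forall_mem (f := fun j : ℕ => 2 * r (2*j+1)) ?_ ?_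
  · have hsm : StrictMono (fun j : ℕ => 2 * r (2*j+1)) := by
      apply strictMono_nat_of_lt_succ
      intro n
      have : r (2*n+1) < r (2*n+3) := r_lt_two_step _
      have h2 : 2*(n+1)+1 = 2*n+3 := by ring
      rw [h2]
      omega
    exact hsm.injective
  · intro j
    have hE0 := E_pos (2*j+1)
    have hEh := E_odd_lt_half (2*j+1) ⟨j, rfl⟩
    have heq := bbR_eq (2*j+1)
    rw [(show Odd (2*j+1) from ⟨j, rfl⟩).neg_one_pow] at heq
    have hfl : ⌊bb * ((2 * r (2*j+1) : ℕ) : ℝ)⌋ = 2 * C (2*j+1) - 1 := by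
      have hcast : bb * ((2 * r (2*j+1) : ℕ) : ℝ) = 2 * (bb * ((R (2*j+1) : ℤ) : ℝ)) := by
        push_cast [R]; ring
      rw [hcast, heq, Int.floor_eq_iff]
      push_cast
      constructor <;> nlinarith
    have hCo : ¬ Even (2 * C (2*j+1) - 1) := by
      intro ⟨w, hw⟩; omega
    show qB (2 * r (2*j+1))
    refine ⟨by have := r_pos (2*j+1); omega, ?_⟩
    by_contra hc
    push_neg at hc
    exact hCo (by rw [← hfl, floor_bb_eq]; exact (even_floor_iff _).mpr hc)

end Stmt2Aux


open Stmt2Aux in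
open Classical in
theorem stmt_2 (n : ℕ) (hn : 1 ≤ n) : a n < 2 * n ∧ 2 * n ≤ b n := by
  have hS : 1 ≤ S (2*(n-1)+1) := S_odd_ge_one (n-1)
  have hm : 2*(n-1)+1 = 2*n-1 := by omega
  obtain ⟨hc1, hc2⟩ := count_eq (2*n-1)
  have h2n : 2*n-1+1 = 2*n := by omega
  rw [h2n] at hc1 hc2
  rw [hm] at hS
  have hcount_p : (n : ℤ) ≤ Nat.count pA (2*n) := by
    have : ((2*n-1 : ℕ) : ℤ) = 2*(n:ℤ) - 1 := by push_cast; omega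
    rw [this] at hc2
    omega
  have hcount_p' : n ≤ Nat.count pA (2*n) := by exact_mod_cast hcount_p
  have hcount_q : (Nat.count qB (2*n) : ℤ) ≤ (n:ℤ) - 1 := by
    have : ((2*n-1 : ℕ) : ℤ) = 2*(n:ℤ) - 1 := by push_cast; omega
    rw [this] at hc1
    omega
  have hcount_q' : Nat.count qB (2*n) ≤ n - 1 := by
    have h1 : ((n:ℤ) - 1) = ((n - 1 : ℕ) : ℤ) := by push_cast; omega
    rw [h1] at hcount_q
    exact_mod_cast hcount_q
  constructor
  · show Nat.nth pA (n-1) < 2*n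
    rw [← Nat.lt_nth_iff_count_lt (p := pA) pA_infinite]
    omega
  · show 2*n ≤ Nat.nth qB (n-1)
    rw [← Nat.count_le_iff_le_nth (p := qB) qB_infinite]
    exact hcount_q'
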